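/- (Integrability of the σ* integrand.) In the block-diagonal Jordan setting, for every bounded continuous g : [0,∞) → ℂⁿ, the function τ ↦ (p/τ) B̃(−τ) π_u g(τ) is Bochner integrable on (0,∞), and there exists a constant K > 0, depending only on p and A, such that ‖∫_0^∞ (p/τ) B̃(−τ) π_u g(τ) dτ‖ ≤ K ‖g‖_∞. -/

import Mathlib

open MeasureTheory Filter

noncomputable def mlE (p β : ℝ) (z : ℂ) : ℂ :=
  ∑' k : ℕ, z ^ k / Complex.Gamma ((p * k + β : ℝ) : ℂ)

noncomputable def mlER (p β x : ℝ) : ℝ :=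
  ∑' k : ℕ, x ^ k / Real.Gamma (p * k + β)

noncomputable def psi (p : ℝ) (m : ℕ) (t : ℝ) (lam : ℂ) : ℂ :=
  (1 / (m.factorial : ℂ)) *
    iteratedDeriv m (fun z : ℂ => (1 / (p : ℂ)) * Complex.exp ((t : ℂ) * z ^ (1 / (p : ℂ)))) lam

noncomputable def psiT (p : ℝ) (m : ℕ) (t : ℝ) (lam : ℂ) : ℂ :=
  (1 / (m.factorial : ℂ)) *
    iteratedDeriv (m + 1) (fun z : ℂ => Complex.exp ((t : ℂ) * z ^ (1 / (p : ℂ)))) lam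

noncomputable def mlEM {ι : Type*} [Fintype ι] [DecidableEq ι] (p β : ℝ) (M : Matrix ι ι ℂ) :
    Matrix ι ι ℂ :=
  ∑' k : ℕ, (Complex.Gamma ((p * k + β : ℝ) : ℂ))⁻¹ • M ^ k

def jordanBlock (n : ℕ) (lam : ℂ) : Matrix (Fin n) (Fin n) ℂ :=
  Matrix.of fun i j => if i = j then lam else if (i : ℕ) + 1 = (j : ℕ) then 1 else 0

noncomputable def BMat (p : ℝ) (n : ℕ) (t : ℝ) (lam : ℂ) : Matrix (Fin n) (Fin n) ℂ :=
  Matrix.of fun i j => if (i : ℕ) ≤ (j : ℕ) then psi p ((j : ℕ) - (i : ℕ)) t lam else 0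

noncomputable def BTMat (p : ℝ) (n : ℕ) (t : ℝ) (lam : ℂ) : Matrix (Fin n) (Fin n) ℂ :=
  Matrix.of fun i j => if (i : ℕ) ≤ (j : ℕ) then psiT p ((j : ℕ) - (i : ℕ)) t lam else 0

noncomputable def opNorm {ι : Type*} [Fintype ι] [DecidableEq ι] (M : Matrix ι ι ℂ) : ℝ :=
  ‖LinearMap.toContinuousLinearMap (Matrix.toEuclideanLin M)‖

noncomputable def mvE {ι : Type*} [Fintype ι] [DecidableEq ι] (M : Matrix ι ι ℂ)
    (v : EuclideanSpace ℂ ι) : EuclideanSpace ℂ ι :=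
  Matrix.toEuclideanLin M v

def BC {E : Type*} [NormedAddCommGroup E] (x : ℝ → E) : Prop :=
  ContinuousOn x (Set.Ici 0) ∧ ∃ C, ∀ t : ℝ, 0 ≤ t → ‖x t‖ ≤ C

noncomputable def supNorm {E : Type*} [NormedAddCommGroup E] (x : ℝ → E) : ℝ :=
  ⨆ t : Set.Ici (0 : ℝ), ‖x (t : ℝ)‖

structure JordanSetting where
  p : ℝ
  hp0 : 0 < p
  hp1 : p < 1
  l : ℕ
  s : ℕ
  hsl : s ≤ l
  nsz : Fin l → ℕ
  hnsz : ∀ j, 1 ≤ nsz j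
  eig : Fin l → ℂ
  heig : ∀ j, eig j ≠ 0
  hstable : ∀ j : Fin l, (j : ℕ) < s → p * Real.pi / 2 < |Complex.arg (eig j)|
  hunstable : ∀ j : Fin l, s ≤ (j : ℕ) → |Complex.arg (eig j)| < p * Real.pi / 2

abbrev JordanSetting.ix (S : JordanSetting) : Type := Σ j : Fin S.l, Fin (S.nsz j)

abbrev ES (S : JordanSetting) : Type := EuclideanSpace ℂ S.ix

noncomputable def JordanSetting.A (S : JordanSetting) : Matrix S.ix S.ix ℂ :=
  Matrix.blockDiagonal' fun j => jordanBlock (S.nsz j) (S.eig j)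

noncomputable def JordanSetting.B (S : JordanSetting) (t : ℝ) : Matrix S.ix S.ix ℂ :=
  Matrix.blockDiagonal' fun j =>
    if (j : ℕ) < S.s then 0 else BMat S.p (S.nsz j) t (S.eig j)

noncomputable def JordanSetting.Bt (S : JordanSetting) (t : ℝ) : Matrix S.ix S.ix ℂ :=
  Matrix.blockDiagonal' fun j =>
    if (j : ℕ) < S.s then 0 else BTMat S.p (S.nsz j) t (S.eig j)

noncomputable def JordanSetting.piu (S : JordanSetting) (v : ES S) : ES S :=
  (WithLp.equiv 2 (S.ix → ℂ)).symm fun i =>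
    if S.s ≤ (i.1 : ℕ) then (WithLp.equiv 2 (S.ix → ℂ)) v i else 0

noncomputable def JordanSetting.pis (S : JordanSetting) (v : ES S) : ES S :=
  (WithLp.equiv 2 (S.ix → ℂ)).symm fun i =>
    if (i.1 : ℕ) < S.s then (WithLp.equiv 2 (S.ix → ℂ)) v i else 0

noncomputable def JordanSetting.EP (S : JordanSetting) (t : ℝ) : Matrix S.ix S.ix ℂ :=
  mlEM S.p 1 (((t ^ S.p : ℝ) : ℂ) • S.A)

noncomputable def JordanSetting.EPP (S : JordanSetting) (t : ℝ) : Matrix S.ix S.ix ℂ :=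
  mlEM S.p S.p (((t ^ S.p : ℝ) : ℂ) • S.A)

noncomputable def JordanSetting.T (S : JordanSetting) (f : ES S → ES S) (σ : ES S)
    (x : ℝ → ES S) (t : ℝ) : ES S :=
  mvE (S.EP t) σ
    + mvE (S.EP t) (∫ τ in Set.Ioi (0 : ℝ), (S.p / τ) • mvE (S.Bt (-τ)) (S.piu (f (x τ))))
    + ∫ τ in Set.Ioc (0 : ℝ) t, ((t - τ) ^ (S.p - 1)) • mvE (S.EPP (t - τ)) (f (x τ))


section Helpers

open Metric Complex Topology
open scoped NNReal

lemma my_cauchy_est {f : ℂ → ℂ} {c : ℂ} {R : ℝ≥0} (hR : 0 < R)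
    (hd : DifferentiableOn ℂ f (closedBall c R)) {M : ℝ}
    (hM : ∀ z ∈ closedBall c (R : ℝ), ‖f z‖ ≤ M) (n : ℕ) :
    ‖iteratedDeriv n f c‖ ≤ n.factorial * M / (R : ℝ) ^ n := by
  have hR' : (0 : ℝ) < R := hR
  have h := hd.hasFPowerSeriesOnBall hR
  have key : iteratedDeriv n f c
      = n.factorial • (cauchyPowerSeries f c R n fun _ => (1 : ℂ)) := by
    rw [iteratedDeriv_eq_iteratedFDeriv, ← h.factorial_smul (1 : ℂ) n]
  have hMnn : 0 ≤ M := le_trans (norm_nonneg _) (hM c (mem_closedBall_self hR'.le))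
  have hnorm : ‖cauchyPowerSeries f c R n fun _ => (1 : ℂ)‖ ≤ ‖cauchyPowerSeries f c R n‖ := by
    simpa using (cauchyPowerSeries f c R n).le_opNorm fun _ => (1 : ℂ)
  have hint : ∫ θ : ℝ in (0)..(2 * Real.pi), ‖f (circleMap c R θ)‖ ≤ 2 * Real.pi * M := by
    have hcont : ContinuousOn (fun θ : ℝ => ‖f (circleMap c R θ)‖) (Set.uIcc 0 (2 * Real.pi)) := by
      apply ContinuousOn.norm
      exact hd.continuousOn.comp (continuous_circleMap c R).continuousOn
        (fun θ _ => circleMap_mem_closedBall c hR'.le θ)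
    calc ∫ θ : ℝ in (0)..(2 * Real.pi), ‖f (circleMap c R θ)‖
        ≤ ∫ _θ : ℝ in (0)..(2 * Real.pi), M := by
          apply intervalIntegral.integral_mono_on Real.two_pi_pos.le
            (hcont.intervalIntegrable) (intervalIntegrable_const)
          exact fun θ _ => hM _ (circleMap_mem_closedBall c hR'.le θ)
      _ = 2 * Real.pi * M := by simp [mul_comm]
  have hcps : ‖cauchyPowerSeries f c R n‖ ≤ M * ((R : ℝ)⁻¹) ^ n := by
    refine le_trans (norm_cauchyPowerSeries_le f c R n) ?_
    rw [_root_.abs_of_nonneg hR'.le]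
    apply mul_le_mul_of_nonneg_right _ (by positivity)
    calc (2 * Real.pi)⁻¹ * ∫ θ : ℝ in (0)..(2 * Real.pi), ‖f (circleMap c R θ)‖
        ≤ (2 * Real.pi)⁻¹ * (2 * Real.pi * M) := by
          apply mul_le_mul_of_nonneg_left hint (by positivity)
      _ = M := by field_simp
  rw [key, ← Nat.cast_smul_eq_nsmul ℂ, norm_smul]
  simp only [norm_natCast]
  calc (n.factorial : ℝ) * ‖cauchyPowerSeries f c R n fun _ => (1:ℂ)‖
      ≤ (n.factorial : ℝ) * (M * ((R:ℝ)⁻¹) ^ n) := by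
        apply mul_le_mul_of_nonneg_left (le_trans hnorm hcps) (by positivity)
    _ = n.factorial * M / (R:ℝ) ^ n := by rw [inv_pow, div_eq_mul_inv]; ring


lemma my_exists_ball (p : ℝ) (hp0 : 0 < p) (hp1 : p < 1) {lam : ℂ} (hlam : lam ≠ 0)
    (harg : |Complex.arg lam| < p * Real.pi / 2) :
    ∃ (R : ℝ≥0) (c0 M0 : ℝ), 0 < R ∧ 0 < c0 ∧ 0 < M0 ∧
      ∀ z ∈ closedBall lam (R : ℝ), 0 < z.re ∧ c0 ≤ (z ^ (1/(p:ℂ))).re ∧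
        ‖z ^ (1/(p:ℂ))‖ ≤ M0 := by
  have hre : 0 < lam.re := by
    have h2 : |Complex.arg lam| < Real.pi / 2 := by
      refine lt_of_lt_of_le harg ?_
      have : p * Real.pi ≤ 1 * Real.pi :=
        mul_le_mul_of_nonneg_right hp1.le Real.pi_pos.le
      linarith
    rcases Complex.abs_arg_lt_pi_div_two_iff.mp h2 with h | h
    · exact h
    · exact absurd h hlam
  set φ : ℂ → ℂ := fun z => z ^ (1/(p:ℂ)) with hφ
  have hφc : ContinuousAt φ lam := continuousAt_cpow_const (Or.inl hre)
  have him : (Complex.log lam * (1/(p:ℂ))).im = Complex.arg lam / p := by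
    have : (1/(p:ℂ)) = ((1/p : ℝ) : ℂ) := by push_cast; ring
    rw [this]
    simp [Complex.mul_im, Complex.log_im, div_eq_mul_inv]
    left
    field_simp
  have hφre : 0 < (φ lam).re := by
    rw [hφ]
    simp only
    rw [Complex.cpow_def_of_ne_zero hlam, Complex.exp_re, him]
    have hcos : 0 < Real.cos (Complex.arg lam / p) := by
      apply Real.cos_pos_of_mem_Ioo
      constructor
      · have h := (abs_lt.mp harg).1
        rw [lt_div_iff₀ hp0]
        nlinarith
      · have h := (abs_lt.mp harg).2
        rw [div_lt_iff₀ hp0]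
        nlinarith
    exact mul_pos (Real.exp_pos _) hcos
  have e1 : ∀ᶠ z in 𝓝 lam, 0 < z.re :=
    (Complex.continuous_re.continuousAt).eventually (eventually_gt_nhds hre)
  have e2 : ∀ᶠ z in 𝓝 lam, (φ lam).re / 2 < (φ z).re :=
    ((Complex.continuous_re.continuousAt).comp hφc).eventually
      (eventually_gt_nhds (half_lt_self hφre))
  have e3 : ∀ᶠ z in 𝓝 lam, ‖φ z‖ < ‖φ lam‖ + 1 :=
    hφc.norm.eventually (eventually_lt_nhds (lt_add_one _))
  obtain ⟨r, hr0, hball⟩ :=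
    Metric.nhds_basis_closedBall.eventually_iff.mp ((e1.and e2).and e3)
  refine ⟨⟨r, hr0.le⟩, (φ lam).re / 2, ‖φ lam‖ + 1, hr0, half_pos hφre, by positivity, ?_⟩
  intro z hz
  obtain ⟨⟨h1, h2⟩, h3⟩ := hball hz
  exact ⟨h1, h2.le, h3.le⟩


lemma my_idw_open {f : ℂ → ℂ} {s : Set ℂ} {x : ℂ} (hs : IsOpen s) (hx : x ∈ s) (n : ℕ) :
    iteratedDerivWithin n f s x = iteratedDeriv n f x := by
  rw [iteratedDerivWithin_eq_iteratedFDerivWithin, iteratedDeriv_eq_iteratedFDeriv,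
    iteratedFDerivWithin_of_isOpen n hs hx]


lemma my_master (p : ℝ) (hp0 : 0 < p) (hp1 : p < 1) {lam : ℂ} (hlam : lam ≠ 0)
    (harg : |Complex.arg lam| < p * Real.pi / 2) (m : ℕ) :
    ∃ C c : ℝ, 0 < C ∧ 0 < c ∧
      (∀ τ : ℝ, 0 ≤ τ → ‖psiT p m (-τ) lam‖ ≤ C * τ * Real.exp (-(c * τ))) ∧
      ContinuousOn (fun τ : ℝ => psiT p m (-τ) lam) (Set.Ici 0) := by
  obtain ⟨R, c0, M0, hR, hc0, hM0, hball⟩ := my_exists_ball p hp0 hp1 hlam harg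
  have hR' : (0:ℝ) < R := hR
  set n : ℕ := m + 1 with hn
  set f : ℝ → ℂ → ℂ := fun t z => Complex.exp ((t : ℂ) * z ^ (1/(p:ℂ))) with hf
  set Φ : ℝ → ℂ := fun t => iteratedDeriv n (f t) lam with hΦ
  -- differentiability
  have hdiff : ∀ t : ℝ, DifferentiableOn ℂ (f t) (closedBall lam (R:ℝ)) := by
    intro t z hz
    obtain ⟨hzre, -, -⟩ := hball z hz
    exact (((differentiableAt_id.cpow (differentiableAt_const _)
      (Or.inl hzre)).const_mul ((t:ℂ))).cexp).differentiableWithinAt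
  -- pointwise bound 1
  have hB1 : ∀ τ : ℝ, 0 ≤ τ → ∀ z ∈ closedBall lam (R:ℝ),
      ‖f (-τ) z‖ ≤ Real.exp (-(c0 * τ)) := by
    intro τ hτ z hz
    obtain ⟨-, hre, -⟩ := hball z hz
    rw [hf]
    simp only [Complex.norm_exp]
    apply Real.exp_le_exp.mpr
    have : (((-τ : ℝ) : ℂ) * z ^ (1/(p:ℂ))).re = -τ * (z ^ (1/(p:ℂ))).re := by
      simp [Complex.mul_re]
    rw [this]
    nlinarith
  -- pointwise difference bound
  have hB2 : ∀ τ' τ : ℝ, 0 ≤ τ' → τ' ≤ τ → ∀ z ∈ closedBall lam (R:ℝ),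
      ‖f (-τ) z - f (-τ') z‖ ≤ 2 * M0 * (τ - τ') := by
    intro τ' τ hτ' hττ z hz
    obtain ⟨-, hre, hnw⟩ := hball z hz
    set w := z ^ (1/(p:ℂ)) with hw
    have hwre : 0 ≤ w.re := le_trans hc0.le hre
    have hs0 : 0 ≤ τ - τ' := by linarith
    have e1 : Complex.exp (((-τ : ℝ) : ℂ) * w)
        = Complex.exp (((-τ' : ℝ) : ℂ) * w) * Complex.exp (((-(τ - τ') : ℝ) : ℂ) * w) := by
      rw [← Complex.exp_add]
      exact congrArg Complex.exp (by push_cast; ring)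
    have key : f (-τ) z - f (-τ') z
        = Complex.exp (((-τ' : ℝ) : ℂ) * w) * (Complex.exp (((-(τ - τ') : ℝ) : ℂ) * w) - 1) := by
      rw [mul_sub, mul_one, ← e1]
    rw [key, norm_mul]
    have h1 : ‖Complex.exp (((-τ' : ℝ) : ℂ) * w)‖ ≤ 1 := by
      simp only [Complex.norm_exp]
      rw [Real.exp_le_one_iff]
      have : (((-τ' : ℝ) : ℂ) * w).re = -τ' * w.re := by simp [Complex.mul_re]
      rw [this]
      nlinarith
    have h2 : ‖Complex.exp (((-(τ - τ') : ℝ) : ℂ) * w) - 1‖ ≤ 2 * M0 * (τ - τ') := by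
      have hnsw : ‖((-(τ - τ') : ℝ) : ℂ) * w‖ = (τ - τ') * ‖w‖ := by
        rw [norm_mul, Complex.norm_real, Real.norm_eq_abs,
          _root_.abs_of_nonpos (by linarith), neg_neg]
      rcases le_or_gt (‖((-(τ - τ') : ℝ) : ℂ) * w‖) 1 with hc | hc
      · have := Complex.norm_exp_sub_one_le (x := ((-(τ - τ') : ℝ) : ℂ) * w) hc
        rw [hnsw] at this
        calc ‖Complex.exp (((-(τ - τ') : ℝ) : ℂ) * w) - 1‖ ≤ 2 * ((τ - τ') * ‖w‖) := this
          _ ≤ 2 * M0 * (τ - τ') := by nlinarith [norm_nonneg w]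
      · have hsw1 : 1 ≤ (τ - τ') * ‖w‖ := by rw [← hnsw]; exact hc.le
        have hexp1 : ‖Complex.exp (((-(τ - τ') : ℝ) : ℂ) * w)‖ ≤ 1 := by
          simp only [Complex.norm_exp]
          rw [Real.exp_le_one_iff]
          have : (((-(τ - τ') : ℝ) : ℂ) * w).re = -(τ - τ') * w.re := by simp [Complex.mul_re]
          rw [this]
          nlinarith
        calc ‖Complex.exp (((-(τ - τ') : ℝ) : ℂ) * w) - 1‖
            ≤ ‖Complex.exp (((-(τ - τ') : ℝ) : ℂ) * w)‖ + ‖(1:ℂ)‖ := norm_sub_le _ _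
          _ ≤ 2 := by rw [norm_one]; linarith
          _ ≤ 2 * ((τ - τ') * ‖w‖) := by nlinarith
          _ ≤ 2 * M0 * (τ - τ') := by nlinarith [norm_nonneg w]
    calc ‖Complex.exp (((-τ' : ℝ) : ℂ) * w)‖ * ‖Complex.exp (((-(τ - τ') : ℝ) : ℂ) * w) - 1‖
        ≤ 1 * (2 * M0 * (τ - τ')) := mul_le_mul h1 h2 (norm_nonneg _) zero_le_one
      _ = 2 * M0 * (τ - τ') := one_mul _
  -- Lipschitz for Φ
  set KL : ℝ := n.factorial * (2 * M0) / (R:ℝ) ^ n with hKL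
  have hKLpos : 0 < KL := by positivity
  have hLip : ∀ τ' τ : ℝ, 0 ≤ τ' → τ' ≤ τ → ‖Φ (-τ) - Φ (-τ')‖ ≤ KL * (τ - τ') := by
    intro τ' τ hτ' hττ
    have hsub : Φ (-τ) - Φ (-τ') = iteratedDeriv n (f (-τ) - f (-τ')) lam := by
      have hu : UniqueDiffOn ℂ (ball lam (R:ℝ)) := isOpen_ball.uniqueDiffOn
      have hmem : lam ∈ ball lam (R:ℝ) := mem_ball_self hR'
      have h1 : ContDiffOn ℂ n (f (-τ)) (ball lam (R:ℝ)) :=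
        ((hdiff (-τ)).mono ball_subset_closedBall).contDiffOn isOpen_ball
      have h2 : ContDiffOn ℂ n (f (-τ')) (ball lam (R:ℝ)) :=
        ((hdiff (-τ')).mono ball_subset_closedBall).contDiffOn isOpen_ball
      rw [hΦ]
      simp only
      rw [← my_idw_open isOpen_ball hmem n, ← my_idw_open isOpen_ball hmem n,
        ← my_idw_open isOpen_ball hmem n,
        iteratedDerivWithin_sub hmem hu (h1.contDiffWithinAt hmem) (h2.contDiffWithinAt hmem)]
    rw [hsub]
    have hd' : DifferentiableOn ℂ (f (-τ) - f (-τ')) (closedBall lam (R:ℝ)) :=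
      (hdiff (-τ)).sub (hdiff (-τ'))
    have := my_cauchy_est hR hd' (M := 2 * M0 * (τ - τ'))
      (fun z hz => hB2 τ' τ hτ' hττ z hz) n
    calc ‖iteratedDeriv n (f (-τ) - f (-τ')) lam‖
        ≤ n.factorial * (2 * M0 * (τ - τ')) / (R:ℝ) ^ n := this
      _ = KL * (τ - τ') := by rw [hKL]; ring
  -- Φ 0 = 0
  have hzero : Φ 0 = 0 := by
    have hconst : f 0 = fun _ : ℂ => (1:ℂ) := by
      funext z; rw [hf]; simp
    rw [hΦ]
    simp only
    rw [hconst, iteratedDeriv_eq_iteratedFDeriv, iteratedFDeriv_const_of_ne (by omega) (1:ℂ)]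
    simp
  -- decay
  set KD : ℝ := n.factorial / (R:ℝ) ^ n with hKD
  have hKDpos : 0 < KD := by positivity
  have hdecay : ∀ τ : ℝ, 0 ≤ τ → ‖Φ (-τ)‖ ≤ KD * Real.exp (-(c0 * τ)) := by
    intro τ hτ
    have := my_cauchy_est hR (hdiff (-τ)) (fun z hz => hB1 τ hτ z hz) n
    calc ‖Φ (-τ)‖ ≤ n.factorial * Real.exp (-(c0 * τ)) / (R:ℝ) ^ n := this
      _ = KD * Real.exp (-(c0 * τ)) := by rw [hKD]; ring
  -- combine
  set C : ℝ := KL * Real.exp c0 + KD with hC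
  have hCpos : 0 < C := by positivity
  have hΦbound : ∀ τ : ℝ, 0 ≤ τ → ‖Φ (-τ)‖ ≤ C * τ * Real.exp (-(c0 * τ)) := by
    intro τ hτ
    rcases le_total τ 1 with h1 | h1
    · have hL := hLip 0 τ le_rfl hτ
      rw [neg_zero, hzero, sub_zero, sub_zero] at hL
      have h2 : (1:ℝ) ≤ Real.exp (-(c0 * τ)) * Real.exp c0 := by
        rw [← Real.exp_add]
        exact Real.one_le_exp (by nlinarith)
      have h3 : KL * τ ≤ C * τ * Real.exp (-(c0 * τ)) := by
        have hKLτ : 0 ≤ KL * τ := mul_nonneg hKLpos.le hτ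
        have he : 0 < Real.exp (-(c0 * τ)) := Real.exp_pos _
        calc KL * τ = KL * τ * 1 := by ring
          _ ≤ KL * τ * (Real.exp (-(c0 * τ)) * Real.exp c0) :=
              mul_le_mul_of_nonneg_left h2 hKLτ
          _ = (KL * Real.exp c0) * τ * Real.exp (-(c0 * τ)) := by ring
          _ ≤ C * τ * Real.exp (-(c0 * τ)) := by
              rw [hC]
              nlinarith [mul_nonneg (mul_nonneg hKDpos.le hτ) he.le]
      linarith
    · have hd := hdecay τ hτ
      have : KD * Real.exp (-(c0 * τ)) ≤ C * τ * Real.exp (-(c0 * τ)) := by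
        have h2 : KD ≤ C * τ := by nlinarith [Real.exp_pos c0]
        nlinarith [Real.exp_pos (-(c0 * τ))]
      linarith
  -- continuity of Φ ∘ neg on Ici 0
  have hcont : ContinuousOn (fun τ : ℝ => Φ (-τ)) (Set.Ici 0) := by
    apply LipschitzOnWith.continuousOn (K := KL.toNNReal)
    apply LipschitzOnWith.of_dist_le_mul
    intro x hx y hy
    rw [Real.coe_toNNReal _ hKLpos.le, dist_eq_norm, Real.dist_eq]
    rcases le_total x y with h | h
    · rw [norm_sub_rev, _root_.abs_of_nonpos (by linarith), neg_sub]
      exact hLip x y hx h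
    · rw [_root_.abs_of_nonneg (by linarith)]
      exact hLip y x hy h
  have hrepr : ∀ τ : ℝ, psiT p m (-τ) lam = (1 / (m.factorial : ℂ)) * Φ (-τ) := by
    intro τ
    simp only [psiT, hΦ, hn, hf]
  refine ⟨C, c0, hCpos, hc0, ?_, ?_⟩
  · intro τ hτ
    rw [hrepr τ, norm_mul]
    have hle1 : ‖(1 / (m.factorial : ℂ))‖ ≤ 1 := by
      rw [norm_div, norm_one, Complex.norm_natCast]
      rw [div_le_one (by exact_mod_cast m.factorial_pos)]
      exact_mod_cast Nat.one_le_iff_ne_zero.mpr m.factorial_ne_zero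
    have hb := hΦbound τ hτ
    calc ‖(1 / (m.factorial : ℂ))‖ * ‖Φ (-τ)‖
        ≤ 1 * ‖Φ (-τ)‖ := mul_le_mul_of_nonneg_right hle1 (norm_nonneg _)
      _ = ‖Φ (-τ)‖ := one_mul _
      _ ≤ C * τ * Real.exp (-(c0 * τ)) := hb
  · have : (fun τ : ℝ => psiT p m (-τ) lam)
        = fun τ : ℝ => (1 / (m.factorial : ℂ)) * Φ (-τ) := funext hrepr
    rw [this]
    exact continuousOn_const.mul hcont


lemma my_comp_le_norm {ι : Type*} [Fintype ι] (x : EuclideanSpace ℂ ι) (a : ι) :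
    ‖x a‖ ≤ ‖x‖ := by
  rw [EuclideanSpace.norm_eq]
  have h1 : ‖x a‖ = Real.sqrt (‖x a‖ ^ 2) := by
    rw [Real.sqrt_sq (norm_nonneg _)]
  rw [h1]
  apply Real.sqrt_le_sqrt
  exact Finset.single_le_sum (f := fun i => ‖x i‖ ^ 2) (fun i _ => by positivity)
    (Finset.mem_univ a)

lemma my_mvE_apply {ι : Type*} [Fintype ι] [DecidableEq ι] (M : Matrix ι ι ℂ)
    (v : EuclideanSpace ℂ ι) (a : ι) :
    mvE M v a = ∑ b : ι, M a b * v b := by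
  rw [mvE, Matrix.toEuclideanLin_apply]
  rfl

lemma my_mvE_norm_le {ι : Type*} [Fintype ι] [DecidableEq ι] (M : Matrix ι ι ℂ)
    (v : EuclideanSpace ℂ ι) :
    ‖mvE M v‖ ≤ (∑ a : ι, ∑ b : ι, ‖M a b‖) * ‖v‖ := by
  have hcomp : ∀ a : ι, ‖mvE M v a‖ ≤ (∑ b : ι, ‖M a b‖) * ‖v‖ := by
    intro a
    rw [my_mvE_apply]
    calc ‖∑ b : ι, M a b * v b‖ ≤ ∑ b : ι, ‖M a b * v b‖ := norm_sum_le _ _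
      _ ≤ ∑ b : ι, ‖M a b‖ * ‖v‖ := by
          apply Finset.sum_le_sum
          intro b _
          rw [norm_mul]
          exact mul_le_mul_of_nonneg_left (my_comp_le_norm v b) (norm_nonneg _)
      _ = (∑ b : ι, ‖M a b‖) * ‖v‖ := by rw [Finset.sum_mul]
  rw [EuclideanSpace.norm_eq]
  have key : ∑ a : ι, ‖mvE M v a‖ ^ 2 ≤ ((∑ a : ι, ∑ b : ι, ‖M a b‖) * ‖v‖) ^ 2 := by
    calc ∑ a : ι, ‖mvE M v a‖ ^ 2
        ≤ ∑ a : ι, ((∑ b : ι, ‖M a b‖) * ‖v‖) ^ 2 := by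
          apply Finset.sum_le_sum
          intro a _
          exact pow_le_pow_left₀ (norm_nonneg _) (hcomp a) 2
      _ ≤ (∑ a : ι, (∑ b : ι, ‖M a b‖) * ‖v‖) ^ 2 := by
          apply Finset.sum_sq_le_sq_sum_of_nonneg
          intro a _
          positivity
      _ = ((∑ a : ι, ∑ b : ι, ‖M a b‖) * ‖v‖) ^ 2 := by rw [← Finset.sum_mul]
  calc Real.sqrt (∑ a : ι, ‖mvE M v a‖ ^ 2)
      ≤ Real.sqrt (((∑ a : ι, ∑ b : ι, ‖M a b‖) * ‖v‖) ^ 2) := Real.sqrt_le_sqrt key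
    _ = (∑ a : ι, ∑ b : ι, ‖M a b‖) * ‖v‖ := Real.sqrt_sq (by positivity)


lemma my_piu_apply (S : JordanSetting) (v : ES S) (a : S.ix) :
    S.piu v a = if S.s ≤ (a.1 : ℕ) then v a else 0 := rfl

lemma my_piu_norm_le (S : JordanSetting) (v : ES S) : ‖S.piu v‖ ≤ ‖v‖ := by
  rw [EuclideanSpace.norm_eq, EuclideanSpace.norm_eq]
  apply Real.sqrt_le_sqrt
  apply Finset.sum_le_sum
  intro a _
  rw [my_piu_apply]
  by_cases h : S.s ≤ (a.1 : ℕ) <;> simp [h] <;> positivity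

lemma my_Bt_entry (S : JordanSetting) (a b : S.ix) :
    (∀ t : ℝ, S.Bt t a b = 0) ∨
      ∃ (j : Fin S.l) (m : ℕ), S.s ≤ (j : ℕ) ∧
        ∀ t : ℝ, S.Bt t a b = psiT S.p m t (S.eig j) := by
  rcases a with ⟨j, i⟩
  rcases b with ⟨j', i'⟩
  by_cases hjj : j = j'
  · subst hjj
    have h1 : ∀ t : ℝ, S.Bt t ⟨j, i⟩ ⟨j, i'⟩
        = (if (j : ℕ) < S.s then 0 else BTMat S.p (S.nsz j) t (S.eig j)) i i' := fun t => by
      simp only [JordanSetting.Bt]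
      exact Matrix.blockDiagonal'_apply_eq
        (fun k : Fin S.l => if (k : ℕ) < S.s then 0 else BTMat S.p (S.nsz k) t (S.eig k)) j i i'
    by_cases hs : (j : ℕ) < S.s
    · left
      intro t
      rw [h1, if_pos hs]
      simp
    · by_cases hij : (i : ℕ) ≤ (i' : ℕ)
      · right
        refine ⟨j, (i' : ℕ) - (i : ℕ), le_of_not_gt hs, fun t => ?_⟩
        rw [h1, if_neg hs]
        show (if (i : ℕ) ≤ (i' : ℕ) then psiT S.p ((i' : ℕ) - (i : ℕ)) t (S.eig j) else 0) = _
        rw [if_pos hij]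
      · left
        intro t
        rw [h1, if_neg hs]
        show (if (i : ℕ) ≤ (i' : ℕ) then psiT S.p ((i' : ℕ) - (i : ℕ)) t (S.eig j) else 0) = 0
        rw [if_neg hij]
  · left
    intro t
    simp only [JordanSetting.Bt]
    exact Matrix.blockDiagonal'_apply_ne
      (fun k : Fin S.l => if (k : ℕ) < S.s then 0 else BTMat S.p (S.nsz k) t (S.eig k)) _ _ hjj

end Helpers

theorem stmt_7 (S : JordanSetting) :
    ∃ K > (0 : ℝ), ∀ g : ℝ → ES S, BC g →
      MeasureTheory.IntegrableOn
          (fun τ : ℝ => (S.p / τ) • mvE (S.Bt (-τ)) (S.piu (g τ))) (Set.Ioi 0) ∧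
        ‖∫ τ in Set.Ioi (0 : ℝ), (S.p / τ) • mvE (S.Bt (-τ)) (S.piu (g τ))‖
          ≤ K * supNorm g := by
  classical
  -- supNorm facts
  have hsup0 : ∀ g : ℝ → ES S, 0 ≤ supNorm g := fun g =>
    Real.iSup_nonneg fun t => norm_nonneg _
  have hsup : ∀ g : ℝ → ES S, BC g → ∀ t : ℝ, 0 ≤ t → ‖g t‖ ≤ supNorm g := by
    intro g hg t ht
    obtain ⟨-, Cg, hCg⟩ := hg
    have hbdd : BddAbove (Set.range fun t : Set.Ici (0:ℝ) => ‖g (t : ℝ)‖) := by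
      refine ⟨Cg, ?_⟩
      rintro _ ⟨u, rfl⟩
      exact hCg u u.2
    exact le_ciSup hbdd (⟨t, ht⟩ : Set.Ici (0:ℝ))
  rcases isEmpty_or_nonempty S.ix with hE | hNE
  · -- trivial case: empty index type
    haveI : Subsingleton (ES S) :=
      ⟨fun a b => (WithLp.equiv 2 (S.ix → ℂ)).injective (funext fun i => hE.elim i)⟩
    refine ⟨1, one_pos, fun g hg => ?_⟩
    have hF : (fun τ : ℝ => (S.p / τ) • mvE (S.Bt (-τ)) (S.piu (g τ)))
        = fun _ => (0 : ES S) := funext fun τ => Subsingleton.elim _ _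
    constructor
    · rw [hF]
      exact integrableOn_zero
    · rw [hF]
      rw [MeasureTheory.integral_zero, norm_zero, one_mul]
      exact hsup0 g
  · -- main case
    -- per-entry bounds
    have hpair : ∀ a b : S.ix, ∃ C c : ℝ, 0 < C ∧ 0 < c ∧
        (∀ τ : ℝ, 0 ≤ τ → ‖S.Bt (-τ) a b‖ ≤ C * τ * Real.exp (-(c * τ))) ∧
        ContinuousOn (fun τ : ℝ => S.Bt (-τ) a b) (Set.Ici 0) := by
      intro a b
      rcases my_Bt_entry S a b with h | ⟨j, m, hsj, h⟩
      · refine ⟨1, 1, one_pos, one_pos, fun τ hτ => ?_, ?_⟩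
        · rw [h]
          rw [norm_zero]
          positivity
        · simp only [h]
          exact continuousOn_const
      · obtain ⟨C, c, hC, hc, hb, hcont⟩ :=
          my_master S.p S.hp0 S.hp1 (S.heig j) (S.hunstable j hsj) m
        refine ⟨C, c, hC, hc, fun τ hτ => ?_, ?_⟩
        · rw [h]
          exact hb τ hτ
        · simp only [h]
          exact hcont
    choose Cf cf hCf hcf hbf hcontf using hpair
    haveI : Nonempty (S.ix × S.ix) := ⟨(hNE.some, hNE.some)⟩
    set c : ℝ := Finset.univ.inf' Finset.univ_nonempty
      (fun ab : S.ix × S.ix => cf ab.1 ab.2) with hcdef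
    have hcpos : 0 < c := by
      rw [hcdef]
      rw [Finset.lt_inf'_iff]
      exact fun ab _ => hcf ab.1 ab.2
    have hcle : ∀ a b : S.ix, c ≤ cf a b := fun a b =>
      Finset.inf'_le _ (Finset.mem_univ ((a, b) : S.ix × S.ix))
    set CB : ℝ := ∑ a : S.ix, ∑ b : S.ix, Cf a b with hCBdef
    have hCBpos : 0 < CB := by
      rw [hCBdef]
      apply Finset.sum_pos (fun a _ => Finset.sum_pos (fun b _ => hCf a b) Finset.univ_nonempty)
        Finset.univ_nonempty
    -- sum of entry norms bound
    have hsumBt : ∀ τ : ℝ, 0 ≤ τ →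
        (∑ a : S.ix, ∑ b : S.ix, ‖S.Bt (-τ) a b‖) ≤ CB * τ * Real.exp (-(c * τ)) := by
      intro τ hτ
      have : ∀ a b : S.ix, ‖S.Bt (-τ) a b‖ ≤ Cf a b * (τ * Real.exp (-(c * τ))) := by
        intro a b
        refine le_trans (hbf a b τ hτ) ?_
        have hexp : Real.exp (-(cf a b * τ)) ≤ Real.exp (-(c * τ)) := by
          apply Real.exp_le_exp.mpr
          have := hcle a b
          nlinarith
        have : Cf a b * τ * Real.exp (-(cf a b * τ)) ≤ Cf a b * τ * Real.exp (-(c * τ)) := by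
          apply mul_le_mul_of_nonneg_left hexp (mul_nonneg (hCf a b).le hτ)
        linarith [this]
      calc (∑ a : S.ix, ∑ b : S.ix, ‖S.Bt (-τ) a b‖)
          ≤ ∑ a : S.ix, ∑ b : S.ix, Cf a b * (τ * Real.exp (-(c * τ))) := by
            apply Finset.sum_le_sum
            intro a _
            exact Finset.sum_le_sum fun b _ => this a b
        _ = CB * τ * Real.exp (-(c * τ)) := by
            rw [hCBdef]
            simp only [← Finset.sum_mul]
            ring
    -- the integral ∫ exp(-(c τ))
    have hIint : MeasureTheory.IntegrableOn (fun τ : ℝ => Real.exp (-(c * τ)))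
        (Set.Ioi (0:ℝ)) := by
      have := exp_neg_integrableOn_Ioi 0 hcpos
      simpa [neg_mul] using this
    set I : ℝ := ∫ τ in Set.Ioi (0:ℝ), Real.exp (-(c * τ)) with hIdef
    have hInn : 0 ≤ I := by
      rw [hIdef]
      exact MeasureTheory.integral_nonneg fun τ => (Real.exp_pos _).le
    have hK0 : (0:ℝ) < S.p * CB * I + 1 := by
      have := mul_nonneg (mul_nonneg S.hp0.le hCBpos.le) hInn
      linarith
    refine ⟨S.p * CB * I + 1, hK0, fun g hg => ?_⟩
    -- continuity / measurability of the integrand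
    have hgcont : ContinuousOn g (Set.Ici 0) := hg.1
    have hVcont : ContinuousOn
        (fun τ : ℝ => mvE (S.Bt (-τ)) (S.piu (g τ))) (Set.Ici 0) := by
      have hrepr : (fun τ : ℝ => mvE (S.Bt (-τ)) (S.piu (g τ)))
          = fun τ : ℝ => (WithLp.equiv 2 (S.ix → ℂ)).symm
              (fun a : S.ix => ∑ b : S.ix, S.Bt (-τ) a b * S.piu (g τ) b) := by
        funext τ
        apply (WithLp.equiv 2 (S.ix → ℂ)).injective
        funext a
        exact my_mvE_apply (S.Bt (-τ)) (S.piu (g τ)) a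
      rw [hrepr]
      apply Continuous.comp_continuousOn (PiLp.continuous_toLp 2 (fun _ : S.ix => ℂ))
      apply continuousOn_pi.mpr
      intro a
      apply continuousOn_finset_sum
      intro b _
      apply ContinuousOn.mul (hcontf a b)
      have hgb : ContinuousOn (fun τ : ℝ => g τ b) (Set.Ici 0) := by
        have heval : Continuous (fun x : ES S => x b) :=
          (continuous_apply b).comp (PiLp.continuous_ofLp 2 (fun _ : S.ix => ℂ))
        exact heval.comp_continuousOn hgcont
      by_cases hb : S.s ≤ (b.1 : ℕ)
      · have : (fun τ : ℝ => S.piu (g τ) b) = fun τ : ℝ => g τ b := by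
          funext τ
          rw [my_piu_apply, if_pos hb]
        rw [this]
        exact hgb
      · have : (fun τ : ℝ => S.piu (g τ) b) = fun _ : ℝ => (0 : ℂ) := by
          funext τ
          rw [my_piu_apply, if_neg hb]
        rw [this]
        exact continuousOn_const
    have hFcont : ContinuousOn
        (fun τ : ℝ => (S.p / τ) • mvE (S.Bt (-τ)) (S.piu (g τ))) (Set.Ioi 0) := by
      apply ContinuousOn.fun_smul
      · exact continuousOn_const.div continuousOn_id fun τ hτ => ne_of_gt hτ
      · exact hVcont.mono Set.Ioi_subset_Ici_self
    have hFmeas : MeasureTheory.AEStronglyMeasurable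
        (fun τ : ℝ => (S.p / τ) • mvE (S.Bt (-τ)) (S.piu (g τ)))
        (MeasureTheory.volume.restrict (Set.Ioi 0)) :=
      hFcont.aestronglyMeasurable measurableSet_Ioi
    -- pointwise bound
    have hptw : ∀ τ ∈ Set.Ioi (0:ℝ),
        ‖(S.p / τ) • mvE (S.Bt (-τ)) (S.piu (g τ))‖
          ≤ S.p * CB * supNorm g * Real.exp (-(c * τ)) := by
      intro τ hτ
      have hτ0 : (0:ℝ) < τ := hτ
      rw [norm_smul, Real.norm_eq_abs, abs_of_pos (div_pos S.hp0 hτ0)]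
      have h1 : ‖mvE (S.Bt (-τ)) (S.piu (g τ))‖
          ≤ (∑ a : S.ix, ∑ b : S.ix, ‖S.Bt (-τ) a b‖) * ‖S.piu (g τ)‖ :=
        my_mvE_norm_le _ _
      have h2 : ‖S.piu (g τ)‖ ≤ supNorm g :=
        le_trans (my_piu_norm_le S (g τ)) (hsup g hg τ hτ0.le)
      have h3 : (∑ a : S.ix, ∑ b : S.ix, ‖S.Bt (-τ) a b‖) ≤ CB * τ * Real.exp (-(c * τ)) :=
        hsumBt τ hτ0.le
      have hsums : 0 ≤ (∑ a : S.ix, ∑ b : S.ix, ‖S.Bt (-τ) a b‖) :=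
        Finset.sum_nonneg fun a _ => Finset.sum_nonneg fun b _ => norm_nonneg _
      have h4 : ‖mvE (S.Bt (-τ)) (S.piu (g τ))‖
          ≤ (CB * τ * Real.exp (-(c * τ))) * supNorm g := by
        calc ‖mvE (S.Bt (-τ)) (S.piu (g τ))‖
            ≤ (∑ a : S.ix, ∑ b : S.ix, ‖S.Bt (-τ) a b‖) * ‖S.piu (g τ)‖ := h1
          _ ≤ (CB * τ * Real.exp (-(c * τ))) * supNorm g :=
              mul_le_mul h3 h2 (norm_nonneg _) (by positivity)
      calc S.p / τ * ‖mvE (S.Bt (-τ)) (S.piu (g τ))‖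
          ≤ S.p / τ * ((CB * τ * Real.exp (-(c * τ))) * supNorm g) :=
            mul_le_mul_of_nonneg_left h4 (div_pos S.hp0 hτ0).le
        _ = S.p * CB * supNorm g * Real.exp (-(c * τ)) := by
            field_simp
    have hmajint : MeasureTheory.IntegrableOn
        (fun τ : ℝ => S.p * CB * supNorm g * Real.exp (-(c * τ))) (Set.Ioi (0:ℝ)) :=
      hIint.const_mul _
    have hae : ∀ᵐ τ ∂(MeasureTheory.volume.restrict (Set.Ioi (0:ℝ))),
        ‖(S.p / τ) • mvE (S.Bt (-τ)) (S.piu (g τ))‖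
          ≤ S.p * CB * supNorm g * Real.exp (-(c * τ)) := by
      rw [MeasureTheory.ae_restrict_iff' measurableSet_Ioi]
      exact MeasureTheory.ae_of_all _ hptw
    constructor
    · exact MeasureTheory.Integrable.mono' hmajint hFmeas hae
    · have hnormle := MeasureTheory.norm_integral_le_of_norm_le hmajint hae
      refine le_trans hnormle ?_
      have : (∫ τ in Set.Ioi (0:ℝ), S.p * CB * supNorm g * Real.exp (-(c * τ)))
          = S.p * CB * supNorm g * I := by
        rw [hIdef]
        exact MeasureTheory.integral_const_mul _ _
      rw [this]
      have hs0 := hsup0 g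
      nlinarith [mul_nonneg (mul_nonneg (mul_nonneg S.hp0.le hCBpos.le) hInn) hs0]
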